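/- The vectors β_1, β_2, β_3, β_4, β_5, β_6 are linearly independent over ℚ, and the 6×6 matrix with (i,j)-entry 2⟨β_i|β_j⟩/⟨β_j|β_j⟩ (1 ≤ i, j ≤ 6) equals the Cartan matrix of type A_6, i.e., the matrix with 2 on the diagonal, -1 in entries (i,j) with |i-j| = 1, and 0 elsewhere; hence, up to a common scaling, {β_1, …, β_6} is a set of simple roots for a root system of type A_6. -/
import Mathlib


noncomputable section

/-- The bilinear form `⟨x|y⟩ = (1/8) ∑ i, x i * y i` on `ℚ^24`. -/
def B (x y : Fin 24 → ℚ) : ℚ := (1/8) * ∑ i, x i * y i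

def v1 : Fin 24 → ℚ :=
  (1/7 : ℚ) • ![0,4,4,4,4,4,4,4, 0,4,4,4,4,4,4,4, 0,0,0,0,0,0,0,0]
def v2 : Fin 24 → ℚ :=
  (1/7 : ℚ) • ![0,0,0,0,0,0,0,0, 0,4,4,4,4,4,4,4, 0,4,4,4,4,4,4,4]
def v3 : Fin 24 → ℚ :=
  (1/7 : ℚ) • ![0,4,4,4,4,4,4,4, 0,-4,-4,-4,-4,-4,-4,-4, 0,0,0,0,0,0,0,0]
def v4 : Fin 24 → ℚ :=
  (1/7 : ℚ) • ![-14,2,2,2,2,2,2,2, 0,0,0,0,0,0,0,0, 0,0,0,0,0,0,0,0]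
def v5 : Fin 24 → ℚ :=
  (1/7 : ℚ) • ![0,0,0,0,0,0,0,0, -14,2,2,2,2,2,2,2, 0,0,0,0,0,0,0,0]
def v6 : Fin 24 → ℚ :=
  (1/7 : ℚ) • ![-7,1,1,1,1,1,1,1, -7,1,1,1,1,1,1,1, -7,-3,-3,-3,-3,-3,-3,-3]

/-- `L` is the ℤ-span of `v1, …, v6` in `ℚ^24`. -/
def L : Submodule ℤ (Fin 24 → ℚ) :=
  Submodule.span ℤ {v1, v2, v3, v4, v5, v6}

def f : Fin 24 → ℚ :=
  (1/7 : ℚ) • ![5,1,1,1,1,1,1,1, 1,1,1,1,1,1,1,1, 3,3,3,3,3,3,3,3]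

def β0 : Fin 24 → ℚ :=
  (1/7 : ℚ) • ![-9,-1,-1,-1,-1,-1,-1,-1, 1,1,1,1,1,1,1,1, 3,-1,-1,-1,-1,-1,-1,-1]
def β2 : Fin 24 → ℚ :=
  (1/7 : ℚ) • ![-2,-2,-2,-2,-2,-2,-2,-2, -6,-2,-2,-2,-2,-2,-2,-2, -4,0,0,0,0,0,0,0]
def β3 : Fin 24 → ℚ :=
  (1/7 : ℚ) • ![-2,2,2,2,2,2,2,2, 8,0,0,0,0,0,0,0, -4,0,0,0,0,0,0,0]
def β4 : Fin 24 → ℚ :=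
  (1/7 : ℚ) • ![5,-3,-3,-3,-3,-3,-3,-3, 1,1,1,1,1,1,1,1, 3,-1,-1,-1,-1,-1,-1,-1]
def β5 : Fin 24 → ℚ :=
  (1/7 : ℚ) • ![-2,2,2,2,2,2,2,2, -6,2,2,2,2,2,2,2, -4,0,0,0,0,0,0,0]
def β6 : Fin 24 → ℚ :=
  (1/7 : ℚ) • ![5,1,1,1,1,1,1,1, 1,-3,-3,-3,-3,-3,-3,-3, 3,-1,-1,-1,-1,-1,-1,-1]

/-- `β i` for `i = 0, …, 6`, with `β 1 = f`. -/
def β : Fin 7 → (Fin 24 → ℚ) := ![β0, f, β2, β3, β4, β5, β6]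

set_option maxHeartbeats 4000000 in
/-- `β 1, …, β 6` are linearly independent over ℚ, and the 6×6 matrix of
normalized inner products `2⟨β i|β j⟩/⟨β j|β j⟩` is the Cartan matrix of type `A₆`. -/
theorem stmt8 :
    LinearIndependent ℚ (fun i : Fin 6 => β i.succ) ∧
    (∀ i j : Fin 6,
      2 * B (β i.succ) (β j.succ) / B (β j.succ) (β j.succ) =
        if i = j then 2
        else if (i : ℤ) - (j : ℤ) = 1 ∨ (j : ℤ) - (i : ℤ) = 1 then -1
        else 0) := by
  classical
  have hB : ∀ i j : Fin 6, B (β i.succ) (β j.succ) =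
      (if i = j then (2:ℚ)/7
       else if (i : ℤ) - (j : ℤ) = 1 ∨ (j : ℤ) - (i : ℤ) = 1 then -1/7
       else 0) := by
    intro i j
    fin_cases i <;> fin_cases j
    · show B f f = _
      norm_num [B, f, β2, β3, β4, β5, β6, Fin.sum_univ_succ, Fin.ext_iff]
    · show B f β2 = _
      norm_num [B, f, β2, β3, β4, β5, β6, Fin.sum_univ_succ, Fin.ext_iff]
    · show B f β3 = _
      norm_num [B, f, β2, β3, β4, β5, β6, Fin.sum_univ_succ, Fin.ext_iff]
    · show B f β4 = _
      norm_num [B, f, β2, β3, β4, β5, β6, Fin.sum_univ_succ, Fin.ext_iff]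
    · show B f β5 = _
      norm_num [B, f, β2, β3, β4, β5, β6, Fin.sum_univ_succ, Fin.ext_iff]
    · show B f β6 = _
      norm_num [B, f, β2, β3, β4, β5, β6, Fin.sum_univ_succ, Fin.ext_iff]
    · show B β2 f = _
      norm_num [B, f, β2, β3, β4, β5, β6, Fin.sum_univ_succ, Fin.ext_iff]
    · show B β2 β2 = _
      norm_num [B, f, β2, β3, β4, β5, β6, Fin.sum_univ_succ, Fin.ext_iff]
    · show B β2 β3 = _
      norm_num [B, f, β2, β3, β4, β5, β6, Fin.sum_univ_succ, Fin.ext_iff]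
    · show B β2 β4 = _
      norm_num [B, f, β2, β3, β4, β5, β6, Fin.sum_univ_succ, Fin.ext_iff]
    · show B β2 β5 = _
      norm_num [B, f, β2, β3, β4, β5, β6, Fin.sum_univ_succ, Fin.ext_iff]
    · show B β2 β6 = _
      norm_num [B, f, β2, β3, β4, β5, β6, Fin.sum_univ_succ, Fin.ext_iff]
    · show B β3 f = _
      norm_num [B, f, β2, β3, β4, β5, β6, Fin.sum_univ_succ, Fin.ext_iff]
    · show B β3 β2 = _
      norm_num [B, f, β2, β3, β4, β5, β6, Fin.sum_univ_succ, Fin.ext_iff]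
    · show B β3 β3 = _
      norm_num [B, f, β2, β3, β4, β5, β6, Fin.sum_univ_succ, Fin.ext_iff]
    · show B β3 β4 = _
      norm_num [B, f, β2, β3, β4, β5, β6, Fin.sum_univ_succ, Fin.ext_iff]
    · show B β3 β5 = _
      norm_num [B, f, β2, β3, β4, β5, β6, Fin.sum_univ_succ, Fin.ext_iff]
    · show B β3 β6 = _
      norm_num [B, f, β2, β3, β4, β5, β6, Fin.sum_univ_succ, Fin.ext_iff]
    · show B β4 f = _
      norm_num [B, f, β2, β3, β4, β5, β6, Fin.sum_univ_succ, Fin.ext_iff]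
    · show B β4 β2 = _
      norm_num [B, f, β2, β3, β4, β5, β6, Fin.sum_univ_succ, Fin.ext_iff]
    · show B β4 β3 = _
      norm_num [B, f, β2, β3, β4, β5, β6, Fin.sum_univ_succ, Fin.ext_iff]
    · show B β4 β4 = _
      norm_num [B, f, β2, β3, β4, β5, β6, Fin.sum_univ_succ, Fin.ext_iff]
    · show B β4 β5 = _
      norm_num [B, f, β2, β3, β4, β5, β6, Fin.sum_univ_succ, Fin.ext_iff]
    · show B β4 β6 = _
      norm_num [B, f, β2, β3, β4, β5, β6, Fin.sum_univ_succ, Fin.ext_iff]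
    · show B β5 f = _
      norm_num [B, f, β2, β3, β4, β5, β6, Fin.sum_univ_succ, Fin.ext_iff]
    · show B β5 β2 = _
      norm_num [B, f, β2, β3, β4, β5, β6, Fin.sum_univ_succ, Fin.ext_iff]
    · show B β5 β3 = _
      norm_num [B, f, β2, β3, β4, β5, β6, Fin.sum_univ_succ, Fin.ext_iff]
    · show B β5 β4 = _
      norm_num [B, f, β2, β3, β4, β5, β6, Fin.sum_univ_succ, Fin.ext_iff]
    · show B β5 β5 = _
      norm_num [B, f, β2, β3, β4, β5, β6, Fin.sum_univ_succ, Fin.ext_iff]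
    · show B β5 β6 = _
      norm_num [B, f, β2, β3, β4, β5, β6, Fin.sum_univ_succ, Fin.ext_iff]
    · show B β6 f = _
      norm_num [B, f, β2, β3, β4, β5, β6, Fin.sum_univ_succ, Fin.ext_iff]
    · show B β6 β2 = _
      norm_num [B, f, β2, β3, β4, β5, β6, Fin.sum_univ_succ, Fin.ext_iff]
    · show B β6 β3 = _
      norm_num [B, f, β2, β3, β4, β5, β6, Fin.sum_univ_succ, Fin.ext_iff]
    · show B β6 β4 = _
      norm_num [B, f, β2, β3, β4, β5, β6, Fin.sum_univ_succ, Fin.ext_iff]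
    · show B β6 β5 = _
      norm_num [B, f, β2, β3, β4, β5, β6, Fin.sum_univ_succ, Fin.ext_iff]
    · show B β6 β6 = _
      norm_num [B, f, β2, β3, β4, β5, β6, Fin.sum_univ_succ, Fin.ext_iff]
  constructor
  · rw [Fintype.linearIndependent_iff]
    intro c hc
    have key : ∀ j : Fin 6, ∑ i : Fin 6, c i * B (β i.succ) (β j.succ) = 0 := by
      intro j
      have h0 : B (∑ i : Fin 6, c i • β i.succ) (β j.succ)
          = ∑ i : Fin 6, c i * B (β i.succ) (β j.succ) := by
        simp only [B, Finset.sum_apply, Pi.smul_apply, smul_eq_mul, Finset.sum_mul,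
          Finset.mul_sum]
        rw [Finset.sum_comm]
        congr 1; ext i; congr 1; ext k; ring
      rw [hc] at h0
      simp only [B] at h0 ⊢
      rw [← h0]
      simp
    have h0 := key 0
    have h1 := key 1
    have h2 := key 2
    have h3 := key 3
    have h4 := key 4
    have h5 := key 5
    simp only [Fin.sum_univ_six, hB] at h0 h1 h2 h3 h4 h5
    norm_num [Fin.ext_iff, show ((0:Fin 6):ℤ) = 0 from rfl, show ((1:Fin 6):ℤ) = 1 from rfl, show ((2:Fin 6):ℤ) = 2 from rfl, show ((3:Fin 6):ℤ) = 3 from rfl, show ((4:Fin 6):ℤ) = 4 from rfl, show ((5:Fin 6):ℤ) = 5 from rfl, show (((0:Fin 6)):ℕ) = 0 from rfl, show (((1:Fin 6)):ℕ) = 1 from rfl, show (((2:Fin 6)):ℕ) = 2 from rfl, show (((3:Fin 6)):ℕ) = 3 from rfl, show (((4:Fin 6)):ℕ) = 4 from rfl, show (((5:Fin 6)):ℕ) = 5 from rfl] at h0 h1 h2 h3 h4 h5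
    intro i
    fin_cases i
    · show c 0 = 0; linarith
    · show c 1 = 0; linarith
    · show c 2 = 0; linarith
    · show c 3 = 0; linarith
    · show c 4 = 0; linarith
    · show c 5 = 0; linarith
  · intro i j
    rw [hB i j, hB j j]
    rcases eq_or_ne i j with h | h
    · subst h; norm_num
    · simp only [if_neg h, if_neg (Ne.symm h)]
      split <;> norm_num
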